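/- arXiv:2307.07209 — 2 statements merged into one kernel-verified Lean document; each statement's English description precedes it below -/
import Mathlib

section
/- For every finite rooted poset X and every si-logic L: X validates L if and only if the Jankov formula 𝒥(X) does not belong to L. -/
/-- Intuitionistic propositional formulas over variables `p₀, p₁, …`. -/
inductive IForm : Type
  | var : ℕ → IForm
  | bot : IForm
  | and : IForm → IForm → IForm
  | or : IForm → IForm → IForm
  | imp : IForm → IForm → IForm

namespace IForm

/-- Uniform substitution. -/
def subst (σ : ℕ → IForm) : IForm → IForm
  | var n => σ n
  | bot => bot
  | and φ ψ => and (subst σ φ) (subst σ ψ)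
  | or φ ψ => or (subst σ φ) (subst σ ψ)
  | imp φ ψ => imp (subst σ φ) (subst σ ψ)

/-- Biconditional `φ ↔ ψ`. -/
def biimp (φ ψ : IForm) : IForm := and (imp φ ψ) (imp ψ φ)

end IForm

/-- The theorems of the intuitionistic propositional calculus `IPC`, given by a
standard Hilbert-style axiomatization (all axioms are schemes, so `IPC` is
closed under uniform substitution) together with modus ponens. -/
inductive IPC : IForm → Prop
  | ax1 (φ ψ : IForm) : IPC (φ.imp (ψ.imp φ))
  | ax2 (φ ψ χ : IForm) : IPC ((φ.imp (ψ.imp χ)).imp ((φ.imp ψ).imp (φ.imp χ)))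
  | andE1 (φ ψ : IForm) : IPC ((φ.and ψ).imp φ)
  | andE2 (φ ψ : IForm) : IPC ((φ.and ψ).imp ψ)
  | andI (φ ψ : IForm) : IPC (φ.imp (ψ.imp (φ.and ψ)))
  | orI1 (φ ψ : IForm) : IPC (φ.imp (φ.or ψ))
  | orI2 (φ ψ : IForm) : IPC (ψ.imp (φ.or ψ))
  | orE (φ ψ χ : IForm) : IPC ((φ.imp χ).imp ((ψ.imp χ).imp ((φ.or ψ).imp χ)))
  | exfalso (φ : IForm) : IPC (IForm.bot.imp φ)
  | mp (φ ψ : IForm) : IPC (φ.imp ψ) → IPC φ → IPC ψ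

/-- A superintuitionistic logic: a set of formulas containing `IPC` and closed
under modus ponens and uniform substitution. -/
def SuperIntuitionistic (L : Set IForm) : Prop :=
  (∀ φ, IPC φ → φ ∈ L) ∧
  (∀ φ ψ, φ.imp ψ ∈ L → φ ∈ L → ψ ∈ L) ∧
  (∀ φ (σ : ℕ → IForm), φ ∈ L → φ.subst σ ∈ L)
/-- Kripke forcing on a poset, relative to a valuation by upsets. -/
def Forces {X : Type} [Preorder X] (v : ℕ → Set X) : X → IForm → Prop
  | x, .var n => x ∈ v n
  | _, .bot => False
  | x, .and φ ψ => Forces v x φ ∧ Forces v x ψ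
  | x, .or φ ψ => Forces v x φ ∨ Forces v x ψ
  | x, .imp φ ψ => ∀ y, x ≤ y → Forces v y φ → Forces v y ψ

/-- A formula is valid in a poset if it is forced at every point under every
valuation by upsets. -/
def ValidIn (X : Type) [Preorder X] (φ : IForm) : Prop :=
  ∀ v : ℕ → Set X, (∀ n, IsUpperSet (v n)) → ∀ x : X, Forces v x φ

/-- A poset validates a logic if every formula of the logic is valid in it. -/
def ValidLogic (X : Type) [Preorder X] (L : Set IForm) : Prop :=
  ∀ φ ∈ L, ValidIn X φ

/-- `Fin(L) = Fin(L')`: the two logics are validated by the same finite posets. -/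
def SameFinPosets (L L' : Set IForm) : Prop :=
  ∀ (X : Type) [Fintype X] [PartialOrder X], ValidLogic X L ↔ ValidLogic X L'

/-- The fmp span of a logic: the si-logics validated by the same finite posets. -/
def fmpSpan (L : Set IForm) : Set (Set IForm) :=
  {L' | SuperIntuitionistic L' ∧ SameFinPosets L L'}

/-- The degree of the finite model property of a logic. -/
def degFmp (L : Set IForm) : Cardinal :=
  Cardinal.mk (fmpSpan L)
/-- The upsets of a preorder. -/
abbrev Ups (X : Type) [Preorder X] : Type := {U : Set X // IsUpperSet U}

/-- Intersection of upsets. -/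
def upsInter {X : Type} [Preorder X] (U V : Ups X) : Ups X := ⟨U.1 ∩ V.1, U.2.inter V.2⟩

/-- Union of upsets. -/
def upsUnion {X : Type} [Preorder X] (U V : Ups X) : Ups X := ⟨U.1 ∪ V.1, U.2.union V.2⟩

/-- Heyting implication of upsets: `U → V = {x : ↑x ∩ U ⊆ V}`. -/
def upsHimp {X : Type} [Preorder X] (U V : Ups X) : Ups X :=
  ⟨{x | ∀ y, x ≤ y → y ∈ U.1 → y ∈ V.1}, by
    intro a b hab ha y hby hyU
    exact ha y (le_trans hab hby) hyU⟩

/-- The empty upset. -/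
def upsEmpty {X : Type} [Preorder X] : Ups X := ⟨∅, isUpperSet_empty⟩

/-- Finite conjunction. -/
def bigConj : List IForm → IForm
  | [] => IForm.bot.imp IForm.bot
  | φ :: l => φ.and (bigConj l)

/-- The Jankov formula of a finite rooted poset `X` with root `r`: choosing a
distinct variable `p_U` for each upset `U` of `X`, it is `δ → p_s`, where `δ`
is the conjunction of `p_{U∩V} ↔ p_U ∧ p_V`, `p_{U∪V} ↔ p_U ∨ p_V`,
`p_{U→V} ↔ (p_U → p_V)` over all upsets `U, V`, together with `p_∅ ↔ ⊥`, and
`s = X ∖ {r}` is the second largest element of `Up(X)`. -/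
noncomputable def jankov (X : Type) [Fintype X] [PartialOrder X] (r : X)
    (hr : ∀ x, r ≤ x) : IForm :=
  letI : Fintype (Ups X) := Fintype.ofFinite _
  let e : Ups X ≃ Fin (Fintype.card (Ups X)) := Fintype.equivFin (Ups X)
  let p : Ups X → IForm := fun U => IForm.var (e U).val
  let all : List (Ups X) := (List.finRange (Fintype.card (Ups X))).map e.symm
  let triple : Ups X → Ups X → IForm := fun U V =>
    ((p (upsInter U V)).biimp ((p U).and (p V))).and
      (((p (upsUnion U V)).biimp ((p U).or (p V))).and
        ((p (upsHimp U V)).biimp ((p U).imp (p V))))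
  let δ : IForm :=
    (bigConj (all.map fun U => bigConj (all.map fun V => triple U V))).and
      ((p upsEmpty).biimp IForm.bot)
  let s : Ups X := ⟨Set.univ \ {r}, by
    intro a b hab ha
    simp only [Set.mem_diff, Set.mem_univ, Set.mem_singleton_iff, true_and] at ha ⊢
    intro hb
    exact ha (le_antisymm (hb ▸ hab) (hr a))⟩
  δ.imp (p s)

/-- A formula is a Jankov formula if it is the Jankov formula of some finite
rooted poset. -/
def IsJankovFormula (φ : IForm) : Prop :=
  ∃ (X : Type) (i1 : Fintype X) (i2 : PartialOrder X) (r : X)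
    (hr : ∀ x : X, i2.le r x), φ = @jankov X i1 i2 r hr

namespace JankovProof

open IForm

/-- Derivability from a finite list of hypotheses. -/
inductive Deriv : List IForm → IForm → Prop
  | hyp {Γ φ} : φ ∈ Γ → Deriv Γ φ
  | ax {Γ φ} : IPC φ → Deriv Γ φ
  | mp {Γ} (φ ψ) : Deriv Γ (φ.imp ψ) → Deriv Γ φ → Deriv Γ ψ

theorem Deriv.weaken {Γ Γ' : List IForm} {φ} (h : Deriv Γ φ)
    (hs : ∀ x ∈ Γ, x ∈ Γ') : Deriv Γ' φ := by
  induction h with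
  | hyp h => exact .hyp (hs _ h)
  | ax h => exact .ax h
  | mp φ ψ _ _ ih1 ih2 => exact .mp φ ψ ih1 ih2

theorem wk1 {Γ γ φ} (h : Deriv Γ φ) : Deriv (γ :: Γ) φ :=
  h.weaken fun _ hx => List.mem_cons_of_mem _ hx

theorem hyp0 {Γ γ} : Deriv (γ :: Γ) γ := .hyp (List.mem_cons_self)

theorem hyp1 {Γ γ γ'} : Deriv (γ' :: γ :: Γ) γ :=
  .hyp (List.mem_cons_of_mem _ (List.mem_cons_self))

theorem impId (Γ : List IForm) (φ : IForm) : Deriv Γ (φ.imp φ) :=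
  .ax (IPC.mp _ _ (IPC.mp _ _ (IPC.ax2 φ (φ.imp φ) φ) (IPC.ax1 ..)) (IPC.ax1 ..))

theorem deduction {Γ γ φ} (h : Deriv (γ :: Γ) φ) : Deriv Γ (γ.imp φ) := by
  induction h with
  | hyp h =>
    rcases List.mem_cons.1 h with h | h
    · subst h; exact impId ..
    · exact .mp _ _ (.ax (IPC.ax1 ..)) (.hyp h)
  | ax h => exact .mp _ _ (.ax (IPC.ax1 ..)) (.ax h)
  | mp φ ψ _ _ ih1 ih2 => exact .mp _ _ (.mp _ _ (.ax (IPC.ax2 ..)) ih1) ih2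

theorem Deriv.toIPC {φ} (h : Deriv [] φ) : IPC φ := by
  induction h with
  | hyp h => simp at h
  | ax h => exact h
  | mp φ ψ _ _ ih1 ih2 => exact IPC.mp _ _ ih1 ih2

theorem dmp {Γ} {a b : IForm} (h : Deriv Γ (a.imp b)) (ha : Deriv Γ a) : Deriv Γ b :=
  .mp _ _ h ha

theorem dandE1 {Γ} {a b : IForm} (h : Deriv Γ (a.and b)) : Deriv Γ a :=
  dmp (.ax (IPC.andE1 ..)) h

theorem dandE2 {Γ} {a b : IForm} (h : Deriv Γ (a.and b)) : Deriv Γ b :=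
  dmp (.ax (IPC.andE2 ..)) h

theorem dandI {Γ} {a b : IForm} (ha : Deriv Γ a) (hb : Deriv Γ b) : Deriv Γ (a.and b) :=
  dmp (dmp (.ax (IPC.andI ..)) ha) hb

theorem dorE {Γ} {a b c : IForm} (h : Deriv Γ (a.or b)) (h1 : Deriv (a :: Γ) c)
    (h2 : Deriv (b :: Γ) c) : Deriv Γ c :=
  dmp (dmp (dmp (.ax (IPC.orE ..)) (deduction h1)) (deduction h2)) h

theorem biimp_mp {Γ} {a b : IForm} (h : Deriv Γ (a.biimp b)) (ha : Deriv Γ a) :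
    Deriv Γ b := dmp (dandE1 h) ha

theorem biimp_mpr {Γ} {a b : IForm} (h : Deriv Γ (a.biimp b)) (hb : Deriv Γ b) :
    Deriv Γ a := dmp (dandE2 h) hb

theorem biimp_refl {Γ} {a : IForm} : Deriv Γ (a.biimp a) := dandI (impId ..) (impId ..)

theorem biimp_symm {Γ} {a b : IForm} (h : Deriv Γ (a.biimp b)) : Deriv Γ (b.biimp a) :=
  dandI (dandE2 h) (dandE1 h)

theorem dimpTrans {Γ} {a b c : IForm} (h1 : Deriv Γ (a.imp b)) (h2 : Deriv Γ (b.imp c)) :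
    Deriv Γ (a.imp c) :=
  deduction (dmp (wk1 h2) (dmp (wk1 h1) hyp0))

theorem biimp_trans {Γ} {a b c : IForm} (h1 : Deriv Γ (a.biimp b)) (h2 : Deriv Γ (b.biimp c)) :
    Deriv Γ (a.biimp c) :=
  dandI (dimpTrans (dandE1 h1) (dandE1 h2)) (dimpTrans (dandE2 h2) (dandE2 h1))

theorem and_congr {Γ} {a a' b b' : IForm} (h1 : Deriv Γ (a.biimp a'))
    (h2 : Deriv Γ (b.biimp b')) : Deriv Γ ((a.and b).biimp (a'.and b')) := by
  refine dandI (deduction ?_) (deduction ?_)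
  · exact dandI (biimp_mp (wk1 h1) (dandE1 hyp0)) (biimp_mp (wk1 h2) (dandE2 hyp0))
  · exact dandI (biimp_mpr (wk1 h1) (dandE1 hyp0)) (biimp_mpr (wk1 h2) (dandE2 hyp0))

theorem or_congr {Γ} {a a' b b' : IForm} (h1 : Deriv Γ (a.biimp a'))
    (h2 : Deriv Γ (b.biimp b')) : Deriv Γ ((a.or b).biimp (a'.or b')) := by
  refine dandI (deduction ?_) (deduction ?_)
  · exact dorE hyp0 (dmp (.ax (IPC.orI1 ..)) (biimp_mp (wk1 (wk1 h1)) hyp0))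
      (dmp (.ax (IPC.orI2 ..)) (biimp_mp (wk1 (wk1 h2)) hyp0))
  · exact dorE hyp0 (dmp (.ax (IPC.orI1 ..)) (biimp_mpr (wk1 (wk1 h1)) hyp0))
      (dmp (.ax (IPC.orI2 ..)) (biimp_mpr (wk1 (wk1 h2)) hyp0))

theorem imp_congr {Γ} {a a' b b' : IForm} (h1 : Deriv Γ (a.biimp a'))
    (h2 : Deriv Γ (b.biimp b')) : Deriv Γ ((a.imp b).biimp (a'.imp b')) := by
  refine dandI (deduction (deduction ?_)) (deduction (deduction ?_))
  · exact biimp_mp (wk1 (wk1 h2)) (dmp hyp1 (biimp_mpr (wk1 (wk1 h1)) hyp0))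
  · exact biimp_mpr (wk1 (wk1 h2)) (dmp hyp1 (biimp_mp (wk1 (wk1 h1)) hyp0))

theorem bigConj_proj {Γ} {l : List IForm} {φ} (hφ : φ ∈ l) (h : Deriv Γ (bigConj l)) :
    Deriv Γ φ := by
  induction l with
  | nil => simp at hφ
  | cons a l ih =>
    rcases List.mem_cons.1 hφ with h' | h'
    · subst h'; exact dandE1 h
    · exact ih h' (dandE2 h)

/-! ### Semantics -/

/-- Algebra semantics in upsets. -/
def sem {X : Type} [Preorder X] (w : ℕ → Ups X) : IForm → Ups X
  | .var n => w n
  | .bot => upsEmpty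
  | .and a b => upsInter (sem w a) (sem w b)
  | .or a b => upsUnion (sem w a) (sem w b)
  | .imp a b => upsHimp (sem w a) (sem w b)

theorem forces_iff_sem {X : Type} [Preorder X] (v : ℕ → Set X) (h : ∀ n, IsUpperSet (v n))
    (φ : IForm) (x : X) :
    Forces v x φ ↔ x ∈ (sem (fun n => ⟨v n, h n⟩) φ).1 := by
  induction φ generalizing x with
  | var n => simp [Forces, sem]
  | bot => simp [Forces, sem, upsEmpty]
  | and a b iha ihb => simp [Forces, sem, upsInter, iha, ihb]
  | or a b iha ihb => simp [Forces, sem, upsUnion, iha, ihb]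
  | imp a b iha ihb =>
    simp only [Forces, sem, upsHimp, Set.mem_setOf_eq, iha, ihb]

theorem forces_bigConj {X : Type} [Preorder X] {v : ℕ → Set X} {x : X} {l : List IForm} :
    Forces v x (bigConj l) ↔ ∀ φ ∈ l, Forces v x φ := by
  induction l with
  | nil => simp [bigConj, Forces]
  | cons a l ih => simp [bigConj, Forces, ih]

/-! ### Mirror of the Jankov construction -/

variable {X : Type} [PartialOrder X]

/-- Propositional variable of an upset. -/
def pv {N : ℕ} (e : Ups X ≃ Fin N) (U : Ups X) : IForm := .var (e U).val

def allL {N : ℕ} (e : Ups X ≃ Fin N) : List (Ups X) := (List.finRange N).map e.symm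

def trip {N : ℕ} (e : Ups X ≃ Fin N) (U V : Ups X) : IForm :=
  ((pv e (upsInter U V)).biimp ((pv e U).and (pv e V))).and
    (((pv e (upsUnion U V)).biimp ((pv e U).or (pv e V))).and
      ((pv e (upsHimp U V)).biimp ((pv e U).imp (pv e V))))

def deltaF {N : ℕ} (e : Ups X ≃ Fin N) : IForm :=
  (bigConj ((allL e).map fun U => bigConj ((allL e).map fun V => trip e U V))).and
    ((pv e upsEmpty).biimp .bot)

theorem mem_allL {N : ℕ} (e : Ups X ≃ Fin N) (U : Ups X) : U ∈ allL e :=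
  List.mem_map.2 ⟨e U, List.mem_finRange _, e.symm_apply_apply U⟩

theorem deriv_trip {Γ} {N : ℕ} (e : Ups X ≃ Fin N) (U V : Ups X)
    (hδ : Deriv Γ (deltaF e)) : Deriv Γ (trip e U V) := by
  have h1 := dandE1 hδ
  have h2 := bigConj_proj (List.mem_map_of_mem (mem_allL e U)) h1
  exact bigConj_proj (List.mem_map_of_mem (mem_allL e V)) h2

theorem deriv_le {Γ} {N : ℕ} (e : Ups X ≃ Fin N) {U V : Ups X}
    (hδ : Deriv Γ (deltaF e)) (h : U.1 ⊆ V.1) : Deriv Γ ((pv e U).imp (pv e V)) := by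
  have ht := dandE1 (deriv_trip e U V hδ)
  have hUV : upsInter U V = U := Subtype.ext (Set.inter_eq_left.mpr h)
  rw [hUV] at ht
  exact deduction (dandE2 (biimp_mp (wk1 ht) hyp0))

theorem key {N : ℕ} (e : Ups X ≃ Fin N) (w : ℕ → Ups X) (φ : IForm) :
    Deriv [deltaF e] ((φ.subst fun n => pv e (w n)).biimp (pv e (sem w φ))) := by
  have hd : Deriv [deltaF e] (deltaF e) := hyp0
  induction φ with
  | var n => exact biimp_refl
  | bot => exact biimp_symm (dandE2 hd)
  | and a b iha ihb =>
    have ht := dandE1 (deriv_trip e (sem w a) (sem w b) hd)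
    exact biimp_trans (and_congr iha ihb) (biimp_symm ht)
  | or a b iha ihb =>
    have ht := dandE1 (dandE2 (deriv_trip e (sem w a) (sem w b) hd))
    exact biimp_trans (or_congr iha ihb) (biimp_symm ht)
  | imp a b iha ihb =>
    have ht := dandE2 (dandE2 (deriv_trip e (sem w a) (sem w b) hd))
    exact biimp_trans (imp_congr iha ihb) (biimp_symm ht)

/-! ### Canonical valuation refuting the Jankov formula -/

/-- Canonical valuation: variable `n` is sent to the `n`-th upset. -/
def cv {N : ℕ} (e : Ups X ≃ Fin N) : ℕ → Set X :=
  fun n => if h : n < N then (e.symm ⟨n, h⟩).1 else ∅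

theorem cv_upper {N : ℕ} (e : Ups X ≃ Fin N) (n : ℕ) : IsUpperSet (cv e n) := by
  unfold cv; split
  · exact (e.symm _).2
  · exact isUpperSet_empty

theorem forces_pv {N : ℕ} (e : Ups X ≃ Fin N) (x : X) (U : Ups X) :
    Forces (cv e) x (pv e U) ↔ x ∈ U.1 := by
  show x ∈ cv e (e U).val ↔ _
  simp [cv, (e U).isLt]

theorem forces_delta {N : ℕ} (e : Ups X ≃ Fin N) (x : X) :
    Forces (cv e) x (deltaF e) := by
  refine ⟨?_, ?_, ?_⟩
  · rw [forces_bigConj]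
    intro ψ hψ
    obtain ⟨U, -, rfl⟩ := List.mem_map.1 hψ
    rw [forces_bigConj]
    intro χ hχ
    obtain ⟨V, -, rfl⟩ := List.mem_map.1 hχ
    refine ⟨⟨?_, ?_⟩, ⟨?_, ?_⟩, ?_, ?_⟩ <;> intro y _ h
    · have := (forces_pv e y (upsInter U V)).1 h
      exact ⟨(forces_pv e y U).2 this.1, (forces_pv e y V).2 this.2⟩
    · exact (forces_pv e y (upsInter U V)).2
        ⟨(forces_pv e y U).1 h.1, (forces_pv e y V).1 h.2⟩
    · rcases (forces_pv e y (upsUnion U V)).1 h with h | h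
      · exact Or.inl ((forces_pv e y U).2 h)
      · exact Or.inr ((forces_pv e y V).2 h)
    · refine (forces_pv e y (upsUnion U V)).2 ?_
      rcases h with h | h
      · exact Or.inl ((forces_pv e y U).1 h)
      · exact Or.inr ((forces_pv e y V).1 h)
    · intro z hyz hz
      exact (forces_pv e z V).2 ((forces_pv e y (upsHimp U V)).1 h z hyz
        ((forces_pv e z U).1 hz))
    · refine (forces_pv e y (upsHimp U V)).2 ?_
      intro z hyz hz
      exact (forces_pv e z V).1 (h z hyz ((forces_pv e z U).2 hz))
  · intro y _ h
    exact absurd ((forces_pv e y upsEmpty).1 h) (Set.notMem_empty y)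
  · intro y _ h
    exact h.elim

end JankovProof


/-- **Theorem.** For every finite rooted poset `X` and every si-logic `L`:
`X` validates `L` iff the Jankov formula `𝒥(X)` does not belong to `L`. -/
theorem validLogic_iff_jankov_notMem (X : Type) [Fintype X] [PartialOrder X]
    (r : X) (hr : ∀ x, r ≤ x) (L : Set IForm) (hL : SuperIntuitionistic L) :
    ValidLogic X L ↔ jankov X r hr ∉ L := by
  classical
  open JankovProof in
  letI inst : Fintype (Ups X) := Fintype.ofFinite _
  let e : Ups X ≃ Fin (Fintype.card (Ups X)) := Fintype.equivFin (Ups X)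
  let sU : Ups X := ⟨Set.univ \ {r}, by
    intro a b hab ha
    simp only [Set.mem_diff, Set.mem_univ, Set.mem_singleton_iff, true_and] at ha ⊢
    intro hb
    exact ha (le_antisymm (hb ▸ hab) (hr a))⟩
  have hj : jankov X r hr = (deltaF e).imp (pv e sU) := rfl
  constructor
  · intro hval hmem
    have h1 := hval _ hmem (cv e) (cv_upper e) r
    rw [hj] at h1
    have h2 := h1 r le_rfl (forces_delta e r)
    exact ((forces_pv e r sU).1 h2).2 rfl
  · intro hmem φ hφ v hv x
    by_contra hx
    apply hmem
    set w : ℕ → Ups X := fun n => ⟨v n, hv n⟩ with hw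
    have hrs : r ∉ (sem w φ).1 := fun h =>
      hx ((forces_iff_sem v hv φ x).2 ((sem w φ).2 (hr x) h))
    have hsub : (sem w φ).1 ⊆ sU.1 := fun y hy =>
      ⟨trivial, fun hyr => hrs (hyr ▸ hy)⟩
    set σ : ℕ → IForm := fun n => pv e (w n) with hσ
    have D : Deriv [deltaF e, φ.subst σ] (pv e sU) := by
      have hk : Deriv [deltaF e, φ.subst σ] ((φ.subst σ).biimp (pv e (sem w φ))) :=
        (key e w φ).weaken (by intro y hy; simp at hy; simp [hy])
      have hle : Deriv [deltaF e, φ.subst σ] ((pv e (sem w φ)).imp (pv e sU)) :=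
        deriv_le e hyp0 hsub
      exact dmp hle (biimp_mp hk hyp1)
    have hIPC : IPC ((φ.subst σ).imp ((deltaF e).imp (pv e sU))) :=
      (deduction (deduction D)).toIPC
    rw [hj]
    exact hL.2.1 _ _ (hL.1 _ hIPC) (hL.2.2 φ σ hφ)
end

section
/- (1) For all 1 ≤ m ≤ n, the Esakia space 𝔊ₘ is a continuous p-morphic image of 𝔊ₙ, i.e., there exists a surjective continuous p-morphism from 𝔊ₙ onto 𝔊ₘ. (2) For each n ≥ 1, the Esakia space 𝟏 ⊕ 𝔏₄ ⊕ 𝔠ₙ is a continuous p-morphic image of 𝔊ₙ. -/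
/-- An ordered topological space: the data underlying an Esakia space. -/
structure OTS : Type 1 where
  carrier : Type
  ord : PartialOrder carrier
  topo : TopologicalSpace carrier

namespace OTS

/-- The order of the sum `X ⊕ Y`: every point of `Y` lies below every point
of `X`. -/
def sumLE (X Y : OTS) : (X.carrier ⊕ Y.carrier) → (X.carrier ⊕ Y.carrier) → Prop
  | .inl a, .inl b => X.ord.le a b
  | .inr a, .inr b => Y.ord.le a b
  | .inr _, .inl _ => True
  | .inl _, .inr _ => False

/-- `X ⊕ Y`: the sum of ordered topological spaces obtained by placing `Y`
below `X`, with the disjoint-union topology. -/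
def oplus (X Y : OTS) : OTS where
  carrier := X.carrier ⊕ Y.carrier
  ord :=
    { le := sumLE X Y
      le_refl := by
        rintro (a | a)
        · exact X.ord.le_refl a
        · exact Y.ord.le_refl a
      le_trans := by
        rintro (a | a) (b | b) (c | c) h1 h2
        · exact X.ord.le_trans a b c h1 h2
        · exact h2
        · exact (h1 : False).elim
        · exact h1
        · trivial
        · exact (h2 : False).elim
        · trivial
        · exact Y.ord.le_trans a b c h1 h2
      le_antisymm := by
        rintro (a | a) (b | b) h1 h2
        · exact congrArg Sum.inl (X.ord.le_antisymm a b h1 h2)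
        · exact (h1 : False).elim
        · exact (h2 : False).elim
        · exact congrArg Sum.inr (Y.ord.le_antisymm a b h1 h2) }
  topo := by
    letI := X.topo; letI := Y.topo
    exact inferInstance

/-- The one-point Esakia space `𝟏`. -/
def onePoint : OTS where
  carrier := PUnit
  ord :=
    { le := fun _ _ => True
      lt := fun _ _ => True ∧ ¬True
      lt_iff_le_not_ge := fun _ _ => Iff.rfl
      le_refl := fun _ => trivial
      le_trans := fun _ _ _ _ _ => trivial
      le_antisymm := fun a b _ _ => by cases a; cases b; rfl }
  topo := ⊥

/-- The `n`-element chain `𝔠ₙ` with the discrete topology. -/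
def chainOTS (n : ℕ) : OTS where
  carrier := Fin n
  ord := inferInstance
  topo := ⊥

/-- The order of the Rieger–Nishimura ladder: the least partial order with
`w_{k+2} ≤ w_k` and `w_{k+3} ≤ w_k` for all `k` and `ω` (encoded by `none`)
below every point; concretely, `w_j ≤ w_k` iff `j = k` or `j ≥ k + 2`. -/
def ladderLE : Option ℕ → Option ℕ → Prop
  | none, _ => True
  | some _, none => False
  | some j, some k => j = k ∨ k + 2 ≤ j

/-- The Rieger–Nishimura ladder `𝔏`: every `w_k` is isolated and the open sets
containing `ω` are exactly the cofinite ones. -/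
def ladder : OTS where
  carrier := Option ℕ
  ord :=
    { le := ladderLE
      lt := fun a b => ladderLE a b ∧ ¬ladderLE b a
      lt_iff_le_not_ge := fun _ _ => Iff.rfl
      le_refl := by
        rintro (_ | j)
        · trivial
        · exact Or.inl rfl
      le_trans := by
        rintro (_ | a) (_ | b) (_ | c) h1 h2
        · trivial
        · trivial
        · trivial
        · trivial
        · exact (h1 : False).elim
        · exact (h1 : False).elim
        · exact (h2 : False).elim
        · have h1' : a = b ∨ b + 2 ≤ a := h1
          have h2' : b = c ∨ c + 2 ≤ b := h2
          show a = c ∨ c + 2 ≤ a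
          omega
      le_antisymm := by
        rintro (_ | a) (_ | b) h1 h2
        · rfl
        · exact (h2 : False).elim
        · exact (h1 : False).elim
        · have h1' : a = b ∨ b + 2 ≤ a := h1
          have h2' : b = a ∨ a + 2 ≤ b := h2
          have hab : a = b := by omega
          rw [hab] }
  topo :=
    { IsOpen := fun U => none ∈ U → Uᶜ.Finite
      isOpen_univ := by intro _; simp
      isOpen_inter := by
        intro s t hs ht hmem
        rw [Set.compl_inter]
        exact (hs hmem.1).union (ht hmem.2)
      isOpen_sUnion := by
        intro S hS hmem
        obtain ⟨U, hU, hUm⟩ := hmem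
        exact (hS U hU hUm).subset
          (Set.compl_subset_compl.mpr (Set.subset_sUnion_of_mem hU)) }

/-- `𝔏₄`: the four-element upset `↑w₄ = {w₄, w₂, w₁, w₀}` of the
Rieger–Nishimura ladder, with the discrete topology. -/
def ladder4 : OTS where
  carrier := {k : ℕ // k = 4 ∨ k = 2 ∨ k = 1 ∨ k = 0}
  ord :=
    { le := fun a b => a.1 = b.1 ∨ b.1 + 2 ≤ a.1
      lt := fun a b => (a.1 = b.1 ∨ b.1 + 2 ≤ a.1) ∧ ¬(b.1 = a.1 ∨ a.1 + 2 ≤ b.1)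
      lt_iff_le_not_ge := fun _ _ => Iff.rfl
      le_refl := fun _ => Or.inl rfl
      le_trans := by
        rintro ⟨a, _⟩ ⟨b, _⟩ ⟨c, _⟩ h1 h2
        have h1' : a = b ∨ b + 2 ≤ a := h1
        have h2' : b = c ∨ c + 2 ≤ b := h2
        show a = c ∨ c + 2 ≤ a
        omega
      le_antisymm := by
        rintro ⟨a, _⟩ ⟨b, _⟩ h1 h2
        have h1' : a = b ∨ b + 2 ≤ a := h1
        have h2' : b = a ∨ a + 2 ≤ b := h2
        have hab : a = b := by omega
        exact Subtype.ext hab }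
  topo := ⊥

/-- `𝔊ₙ = 𝟏 ⊕ 𝔏 ⊕ 𝔏₄ ⊕ 𝔠ₙ`. -/
def G (n : ℕ) : OTS := onePoint.oplus (ladder.oplus (ladder4.oplus (chainOTS n)))

/-- The downset `↓S` generated by a subset. -/
def dset (X : OTS) (S : Set X.carrier) : Set X.carrier :=
  {x | ∃ y ∈ S, X.ord.le x y}

/-- Interpretation of a formula as a subset of the space, via the Heyting
operations on (clopen) upsets: `∩`, `∪`, `U → V = X ∖ ↓(U ∖ V)`, `∅`. -/
def seval (X : OTS) (v : ℕ → Set X.carrier) : IForm → Set X.carrier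
  | .var n => v n
  | .bot => ∅
  | .and φ ψ => seval X v φ ∩ seval X v ψ
  | .or φ ψ => seval X v φ ∪ seval X v ψ
  | .imp φ ψ => (dset X (seval X v φ \ seval X v ψ))ᶜ

/-- Clopen upsets of the space. -/
def IsClopenUpset (X : OTS) (U : Set X.carrier) : Prop :=
  (@IsClopen X.carrier X.topo U) ∧ ∀ a b, X.ord.le a b → a ∈ U → b ∈ U

/-- The logic of an (Esakia) space: the formulas which every assignment of
clopen upsets to the variables sends to the top element `X` of the Heyting
algebra `X*` of clopen upsets. -/
def esLog (X : OTS) : Set IForm :=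
  {φ | ∀ v : ℕ → Set X.carrier, (∀ n, IsClopenUpset X (v n)) →
    seval X v φ = Set.univ}

/-- A p-morphism: `α(↑x) = ↑α(x)` for every `x`. -/
def IsPMorphism (X Y : OTS) (f : X.carrier → Y.carrier) : Prop :=
  ∀ x : X.carrier, f '' {z | X.ord.le x z} = {w | Y.ord.le (f x) w}

/-- Continuity with respect to the topologies of the two spaces. -/
def IsContMap (X Y : OTS) (f : X.carrier → Y.carrier) : Prop :=
  @Continuous X.carrier Y.carrier X.topo Y.topo f

end OTS

open OTS in
lemma isContMap_oplus {X Y X' Y' : OTS} {f : X.carrier → X'.carrier}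
    {g : Y.carrier → Y'.carrier} (hf : IsContMap X X' f) (hg : IsContMap Y Y' g) :
    IsContMap (X.oplus Y) (X'.oplus Y') (Sum.map f g) := by
  letI := X.topo; letI := Y.topo; letI := X'.topo; letI := Y'.topo
  exact Continuous.sumMap hf hg

open OTS in
lemma isContMap_of_bot {X Y : OTS} (h : X.topo = ⊥) (f : X.carrier → Y.carrier) :
    IsContMap X Y f := by
  unfold IsContMap
  rw [h]
  letI := Y.topo
  exact continuous_bot

open OTS in
lemma isContMap_id (X : OTS) : IsContMap X X id := by
  letI := X.topo; exact continuous_id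

open OTS in
/-- **Lemma.** (1) For all `1 ≤ m ≤ n`, `𝔊ₘ` is a continuous p-morphic image
of `𝔊ₙ`. (2) For each `n ≥ 1`, `𝟏 ⊕ 𝔏₄ ⊕ 𝔠ₙ` is a continuous p-morphic image
of `𝔊ₙ`. -/
theorem G_pmorphic_images :
    (∀ m n : ℕ, 1 ≤ m → m ≤ n →
        ∃ f : (G n).carrier → (G m).carrier,
          Function.Surjective f ∧ IsContMap (G n) (G m) f ∧
            IsPMorphism (G n) (G m) f) ∧
    (∀ n : ℕ, 1 ≤ n →
        ∃ f : (G n).carrier → (onePoint.oplus (ladder4.oplus (chainOTS n))).carrier,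
          Function.Surjective f ∧
            IsContMap (G n) (onePoint.oplus (ladder4.oplus (chainOTS n))) f ∧
            IsPMorphism (G n) (onePoint.oplus (ladder4.oplus (chainOTS n))) f) := by
  
  constructor
  · -- Part 1
    intro m n hm hmn
    refine ⟨Sum.map id (Sum.map id (Sum.map id
      (fun i : Fin n => (⟨min i.val (m - 1), by omega⟩ : Fin m)))), ?_, ?_, ?_⟩
    · -- surjective
      rintro (u | (j | (k | j')))
      · exact ⟨Sum.inl u, rfl⟩
      · exact ⟨Sum.inr (Sum.inl j), rfl⟩
      · exact ⟨Sum.inr (Sum.inr (Sum.inl k)), rfl⟩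
      · have hj := j'.isLt
        refine ⟨Sum.inr (Sum.inr (Sum.inr ⟨j'.val, by omega⟩)), ?_⟩
        exact congrArg (fun t : Fin m => (Sum.inr (Sum.inr (Sum.inr t)) : (G m).carrier))
          (Fin.ext (show min j'.val (m - 1) = j'.val by omega))
    · -- continuous
      exact isContMap_oplus (isContMap_id _)
        (isContMap_oplus (isContMap_id _)
          (isContMap_oplus (isContMap_id _) (isContMap_of_bot rfl _)))
    · -- p-morphism
      intro x
      ext w
      simp only [Set.mem_image, Set.mem_setOf_eq]
      constructor
      · rintro ⟨z, hz, rfl⟩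
        rcases x with u | (j | (k | i)) <;> rcases z with u' | (j' | (k' | i')) <;>
          first
            | exact hz
            | exact hz.elim
            | trivial
            | (have hz2 : i.1 ≤ i'.1 := hz
               exact (by omega : min i.1 (m - 1) ≤ min i'.1 (m - 1)))
      · intro hw
        rcases x with u0 | (j0 | (k0 | i0)) <;> rcases w with u | (j | (k | j')) <;>
          first
            | exact ⟨Sum.inl u, hw, rfl⟩
            | exact ⟨Sum.inr (Sum.inl j), hw, rfl⟩
            | exact ⟨Sum.inr (Sum.inr (Sum.inl k)), hw, rfl⟩
            | exact hw.elim
            | (have hw2 : min i0.1 (m - 1) ≤ j'.1 := hw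
               have hj : j'.1 < m := j'.isLt
               have hi : i0.1 < n := i0.isLt
               refine ⟨Sum.inr (Sum.inr (Sum.inr ⟨max i0.1 j'.1, by omega⟩)),
                 (show i0.1 ≤ max i0.1 j'.1 by omega), ?_⟩
               exact congrArg
                 (fun t : Fin m => (Sum.inr (Sum.inr (Sum.inr t)) : (G m).carrier))
                 (Fin.ext (show min (max i0.1 j'.1) (m - 1) = j'.1 by omega)))
  · -- Part 2
    intro n hn
    refine ⟨Sum.elim (fun _ => Sum.inl PUnit.unit)
      (Sum.elim (fun _ => Sum.inl PUnit.unit) Sum.inr), ?_, ?_, ?_⟩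
    · rintro (⟨⟩ | y)
      · exact ⟨Sum.inl PUnit.unit, rfl⟩
      · exact ⟨Sum.inr (Sum.inr y), rfl⟩
    · letI : TopologicalSpace onePoint.carrier := onePoint.topo
      letI : TopologicalSpace ladder.carrier := ladder.topo
      letI : TopologicalSpace ladder4.carrier := ladder4.topo
      letI : TopologicalSpace (chainOTS n).carrier := (chainOTS n).topo
      letI : TopologicalSpace (ladder4.oplus (chainOTS n)).carrier :=
        (ladder4.oplus (chainOTS n)).topo
      letI : TopologicalSpace (ladder.oplus (ladder4.oplus (chainOTS n))).carrier :=
        (ladder.oplus (ladder4.oplus (chainOTS n))).topo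
      letI : TopologicalSpace (onePoint.oplus (ladder4.oplus (chainOTS n))).carrier :=
        (onePoint.oplus (ladder4.oplus (chainOTS n))).topo
      exact Continuous.sumElim continuous_const
        (Continuous.sumElim continuous_const continuous_inr)
    · intro x
      ext w
      simp only [Set.mem_image, Set.mem_setOf_eq]
      constructor
      · rintro ⟨z, hz, rfl⟩
        rcases x with u0 | (j0 | (k0 | i0)) <;> rcases z with u' | (j' | (k' | i')) <;>
          first
            | exact hz
            | exact hz.elim
            | trivial
      · intro hw
        rcases x with u0 | (j0 | (k0 | i0)) <;> rcases w with ⟨⟩ | (k | i) <;>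
          first
            | exact ⟨Sum.inl PUnit.unit, trivial, rfl⟩
            | exact ⟨Sum.inr (Sum.inr (Sum.inl k)), hw, rfl⟩
            | exact ⟨Sum.inr (Sum.inr (Sum.inr i)), hw, rfl⟩
            | exact hw.elim
end
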